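/- Suppose V, Ω : [0,T) → ℝ are differentiable with V' = Ω·V, Ω' = Ω·V², Ω(t) ≥ 0 for all t, and V(0) ≥ √(2·Ω(0)) with Ω(0) > 0. Then Ω'(t) ≥ 2·Ω(t)² for all t ∈ [0,T), and consequently T ≤ 1/(2·Ω(0)). -/

import Mathlib

lemma decay_aux (T : ℝ) (F F' : ℝ → ℝ)
    (hF : ∀ x ∈ Set.Ico (0 : ℝ) T, HasDerivAt F (F' x) x)
    (hF' : ∀ x ∈ Set.Ico (0 : ℝ) T, F' x ≤ 0) :
    ∀ t ∈ Set.Ico (0 : ℝ) T, F t ≤ F 0 := by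
  intro t ht
  obtain ⟨ht0, htT⟩ := ht
  have hsub : Set.Icc (0 : ℝ) t ⊆ Set.Ico (0 : ℝ) T := fun x hx =>
    ⟨hx.1, lt_of_le_of_lt hx.2 htT⟩
  have hanti : AntitoneOn F (Set.Icc 0 t) := by
    apply antitoneOn_of_deriv_nonpos (convex_Icc 0 t)
    · exact fun x hx => ((hF x (hsub hx)).continuousAt).continuousWithinAt
    · intro x hx
      rw [interior_Icc] at hx
      exact ((hF x (hsub (Set.Ioo_subset_Icc_self hx))).differentiableAt).differentiableWithinAt
    · intro x hx
      rw [interior_Icc] at hx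
      have hx' := hsub (Set.Ioo_subset_Icc_self hx)
      rw [(hF x hx').deriv]
      exact hF' x hx'
  exact hanti (Set.left_mem_Icc.mpr ht0) (Set.right_mem_Icc.mpr ht0) ht0

theorem stmt3 (T : ℝ) (V Ω : ℝ → ℝ)
    (hV : ∀ t ∈ Set.Ico (0 : ℝ) T, HasDerivAt V (Ω t * V t) t)
    (hΩ : ∀ t ∈ Set.Ico (0 : ℝ) T, HasDerivAt Ω (Ω t * V t ^ 2) t)
    (hΩpos : ∀ t ∈ Set.Ico (0 : ℝ) T, 0 ≤ Ω t)
    (hΩ0 : 0 < Ω 0)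
    (hV0 : Real.sqrt (2 * Ω 0) ≤ V 0) :
    (∀ t ∈ Set.Ico (0 : ℝ) T, 2 * Ω t ^ 2 ≤ deriv Ω t) ∧ T ≤ 1 / (2 * Ω 0) := by
  have hV0sq : 2 * Ω 0 ≤ V 0 ^ 2 := by
    have h2 : (0:ℝ) ≤ 2 * Ω 0 := by linarith
    nlinarith [Real.sq_sqrt h2, Real.sqrt_nonneg (2 * Ω 0)]
  -- constancy of V² - 2Ω : it is ≤ and ≥ its initial value
  have hconst : ∀ t ∈ Set.Ico (0 : ℝ) T, 2 * Ω t ≤ V t ^ 2 := by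
    intro t ht
    have hle : (fun x => V x ^ 2 - 2 * Ω x) t ≤ (fun x => V x ^ 2 - 2 * Ω x) 0 := by
      apply decay_aux T _ (fun x => 0) _ (fun x _ => le_refl 0) t ht
      intro x hx
      have := (((hV x hx).fun_pow 2).fun_sub ((hΩ x hx).const_mul 2))
      refine this.congr_deriv ?_
      ring
    have hge : (fun x => 2 * Ω x - V x ^ 2) t ≤ (fun x => 2 * Ω x - V x ^ 2) 0 := by
      apply decay_aux T _ (fun x => 0) _ (fun x _ => le_refl 0) t ht
      intro x hx
      have := (((hΩ x hx).const_mul 2).fun_sub ((hV x hx).fun_pow 2))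
      refine this.congr_deriv ?_
      ring
    simp only at hle hge
    nlinarith
  -- Ω is bounded below by Ω 0 (deriv of -Ω is nonpositive)
  have hΩlb : ∀ t ∈ Set.Ico (0 : ℝ) T, Ω 0 ≤ Ω t := by
    intro t ht
    have := decay_aux T (fun x => -Ω x) (fun x => -(Ω x * V x ^ 2))
      (fun x hx => (hΩ x hx).neg)
      (fun x hx => by show -(Ω x * V x ^ 2) ≤ 0; nlinarith [hΩpos x hx, sq_nonneg (V x)]) t ht
    simpa using this
  have hΩt : ∀ t ∈ Set.Ico (0 : ℝ) T, 0 < Ω t := fun t ht => lt_of_lt_of_le hΩ0 (hΩlb t ht)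
  constructor
  · intro t ht
    rw [(hΩ t ht).deriv]
    nlinarith [hconst t ht, hΩt t ht]
  · -- blow-up bound via h(t) = 1/Ω(t) + 2t
    by_contra hT
    push_neg at hT
    have ht0 : (0:ℝ) < 1 / (2 * Ω 0) := by positivity
    set t₀ : ℝ := 1 / (2 * Ω 0) with ht₀def
    have ht₀mem : t₀ ∈ Set.Ico (0 : ℝ) T := ⟨le_of_lt ht0, hT⟩
    have hdecay := decay_aux T (fun x => (Ω x)⁻¹ + 2 * x)
      (fun x => -(Ω x * V x ^ 2) / Ω x ^ 2 + 2)
      (fun x hx => ((hΩ x hx).inv (ne_of_gt (hΩt x hx))).add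
        (by simpa using (hasDerivAt_id x).const_mul (2:ℝ)))
      (fun x hx => by
        have h1 := hΩt x hx
        have h2 := hconst x hx
        have h3 : 2 * Ω x ^ 2 ≤ Ω x * V x ^ 2 := by nlinarith
        have h4 : 0 < Ω x ^ 2 := by positivity
        show -(Ω x * V x ^ 2) / Ω x ^ 2 + 2 ≤ 0
        rw [div_add' _ _ _ (ne_of_gt h4), div_nonpos_iff]
        right
        constructor <;> nlinarith) t₀ ht₀mem
    have hinv : 0 < (Ω t₀)⁻¹ := inv_pos.mpr (hΩt t₀ ht₀mem)
    have h0inv : (Ω 0)⁻¹ = 2 * t₀ := by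
      rw [ht₀def]; field_simp
    nlinarith
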